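/- The HCV system admits an equilibrium (T*, I*, V*) with T* > 0, I* > 0 and V* > 0 if and only if R₀ > 1; when R₀ > 1 this positive equilibrium is unique and satisfies I* = (A/r_I - 1)·T* + T_max·(1 - δ/r_I) and V* = (1-ε)·p·I*/c, where A = (1-θ)·β·p·T_max/c. When R₀ ≤ 1, the only equilibrium with T > 0, I ≥ 0, V ≥ 0 is the uninfected equilibrium (T⁰, 0, 0). -/

import Mathlib

open Set

/-- `(T, I, V)` is an equilibrium point of the HCV system. -/
def hcvEquil (s rT rI dT dI Tmax β p q c η ε : ℝ) (T I V : ℝ) : Prop :=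
  s + rT * T * (1 - (T + I) / Tmax) - dT * T - (1 - η) * β * V * T + q * I = 0 ∧
  rI * I * (1 - (T + I) / Tmax) + (1 - η) * β * V * T - dI * I - q * I = 0 ∧
  (1 - ε) * p * I - c * V = 0

/-- The uninfected equilibrium value `T⁰`. -/
noncomputable def hcvT0 (s rT dT Tmax : ℝ) : ℝ :=
  Tmax / (2 * rT) * (rT - dT + Real.sqrt ((rT - dT) ^ 2 + 4 * rT * s / Tmax))

/-- The basic reproduction number `R₀` (with `1 - θ = (1-ε)(1-η)`). -/
noncomputable def hcvR0 (s rT rI dT dI Tmax β p q c η ε : ℝ) : ℝ :=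
  rI / (dI + q) * (1 - hcvT0 s rT dT Tmax / Tmax)
    + (1 - ε) * (1 - η) * β * p * hcvT0 s rT dT Tmax / (c * (dI + q))

lemma quad_root (c2 c1 c0 a : ℝ) (h2 : 0 < c2)
    (hfa : 0 < -c2*a^2 + c1*a + c0) :
    ∃ R : ℝ, a < R ∧ -c2*R^2 + c1*R + c0 = 0 ∧
      (∀ x, a < x → -c2*x^2 + c1*x + c0 = 0 → x = R) ∧
      (∀ x, a < x → -c2*x^2 + c1*x + c0 < 0 → R < x) := by
  have hdisc : 0 < c1^2 + 4*c2*c0 := by nlinarith [sq_nonneg (c1 - 2*c2*a), mul_pos h2 hfa]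
  have hD0 : 0 ≤ Real.sqrt (c1^2 + 4*c2*c0) := Real.sqrt_nonneg _
  set D := Real.sqrt (c1^2 + 4*c2*c0) with hDdef
  have hD2 : D^2 = c1^2 + 4*c2*c0 := Real.sq_sqrt hdisc.le
  have hDgt : c1 - 2*c2*a < D := by nlinarith [mul_pos h2 hfa]
  have hDgt' : 2*c2*a - c1 < D := by nlinarith [mul_pos h2 hfa]
  refine ⟨(c1+D)/(2*c2), ?_, ?_, ?_, ?_⟩
  · rw [lt_div_iff₀ (by linarith)]; linarith
  · field_simp
    linear_combination (-1)*hD2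
  · intro x hax hfx
    have h1 : (2*c2*x - c1 - D)*(2*c2*x - c1 + D) = 0 := by
      linear_combination (-4*c2)*hfx - hD2
    have h2' : 0 < 2*c2*x - c1 + D := by nlinarith [mul_pos h2 (sub_pos.2 hax)]
    have h3 : 2*c2*x - c1 - D = 0 := by
      rcases mul_eq_zero.mp h1 with h | h
      · exact h
      · nlinarith
    field_simp
    linarith
  · intro x hax hfx
    have h1 : 0 < (2*c2*x - c1)^2 - D^2 := by
      nlinarith [mul_pos h2 (by linarith : 0 < -(-c2*x^2 + c1*x + c0))]
    have h2' : 0 < 2*c2*x - c1 + D := by nlinarith [mul_pos h2 (sub_pos.2 hax)]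
    have h3 : 0 < 2*c2*x - c1 - D := by nlinarith
    rw [div_lt_iff₀ (by linarith)]; linarith

set_option maxHeartbeats 2000000 in
/-- The HCV system has a (unique) positive infected equilibrium iff `R₀ > 1`;
when `R₀ ≤ 1` the only nonnegative equilibrium is the uninfected one. -/
theorem hcv_infected_equilibrium_existence
    (s rT rI dT dI Tmax β p q c η ε : ℝ)
    (hs : 0 < s) (hrT : 0 < rT) (hrI : 0 < rI) (hdT : 0 < dT) (hdI : 0 < dI)
    (hTmax : 0 < Tmax) (hβ : 0 < β) (hp : 0 < p) (hq : 0 < q) (hc : 0 < c)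
    (hη : η ∈ Set.Ico (0 : ℝ) 1) (hε : ε ∈ Set.Ico (0 : ℝ) 1)
    (hrIT : rI ≤ rT) (hsT : s ≤ dT * Tmax) (hdTI : dT ≤ dI) :
    ((∃ Ts Is Vs : ℝ, 0 < Ts ∧ 0 < Is ∧ 0 < Vs ∧
        hcvEquil s rT rI dT dI Tmax β p q c η ε Ts Is Vs) ↔
      1 < hcvR0 s rT rI dT dI Tmax β p q c η ε) ∧
    (1 < hcvR0 s rT rI dT dI Tmax β p q c η ε →
      ∃ Ts Is Vs : ℝ,
        (0 < Ts ∧ 0 < Is ∧ 0 < Vs ∧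
          hcvEquil s rT rI dT dI Tmax β p q c η ε Ts Is Vs) ∧
        Is = ((1 - ε) * (1 - η) * β * p * Tmax / c / rI - 1) * Ts
              + Tmax * (1 - (dI + q) / rI) ∧
        Vs = (1 - ε) * p * Is / c ∧
        (∀ Ts' Is' Vs' : ℝ, 0 < Ts' → 0 < Is' → 0 < Vs' →
          hcvEquil s rT rI dT dI Tmax β p q c η ε Ts' Is' Vs' →
          Ts' = Ts ∧ Is' = Is ∧ Vs' = Vs)) ∧
    (hcvR0 s rT rI dT dI Tmax β p q c η ε ≤ 1 →
      ∀ Ts Is Vs : ℝ, 0 < Ts → 0 ≤ Is → 0 ≤ Vs →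
        hcvEquil s rT rI dT dI Tmax β p q c η ε Ts Is Vs →
        Ts = hcvT0 s rT dT Tmax ∧ Is = 0 ∧ Vs = 0) := by
  obtain ⟨hη0, hη1⟩ := hη
  obtain ⟨hε0, hε1⟩ := hε
  have h1e : (0:ℝ) < 1 - ε := by linarith
  have h1h : (0:ℝ) < 1 - η := by linarith
  have hc' : c ≠ 0 := ne_of_gt hc
  have hTm' : Tmax ≠ 0 := ne_of_gt hTmax
  have hrI' : rI ≠ 0 := ne_of_gt hrI
  have hδ : (0:ℝ) < dI + q := by linarith
  have hδne : dI + q ≠ 0 := ne_of_gt hδ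
  set B := (1-ε)*(1-η)*β*p/c with hBdef
  have hB : 0 < B := div_pos (mul_pos (mul_pos (mul_pos h1e h1h) hβ) hp) hc
  set T0 := hcvT0 s rT dT Tmax with hT0def
  obtain ⟨D, hD0, hD2, hDdef⟩ : ∃ D : ℝ, 0 ≤ D ∧ D^2 = (rT - dT)^2 + 4*rT*s/Tmax ∧
      Real.sqrt ((rT - dT)^2 + 4*rT*s/Tmax) = D :=
    ⟨_, Real.sqrt_nonneg _, Real.sq_sqrt (by positivity), rfl⟩
  have hD2' : Tmax*D^2 = Tmax*(rT-dT)^2 + 4*rT*s := by rw [hD2]; field_simp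
  have hDgt1 : rT - dT < D := by nlinarith [div_pos (by positivity : (0:ℝ) < 4*rT*s) hTmax]
  have hDgt2 : dT - rT < D := by nlinarith [div_pos (by positivity : (0:ℝ) < 4*rT*s) hTmax]
  have hT0eq : T0 = Tmax/(2*rT)*(rT-dT+D) := by
    rw [hT0def]; unfold hcvT0; rw [hDdef]
  have hrTT0 : 2*rT*T0 = Tmax*(rT-dT+D) := by rw [hT0eq]; field_simp
  have hT0pos : 0 < T0 := by
    rw [hT0eq]
    have h : 0 < rT - dT + D := by linarith
    positivity
  have hsq : (2*rT*T0)^2 = (Tmax*(rT-dT+D))^2 := by rw [hrTT0]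
  have hψ0' : 4*rT*(rT*T0^2) = 4*rT*(Tmax*((rT-dT)*T0 + s)) := by
    linear_combination hsq + Tmax*hD2' - (2*Tmax*(rT-dT))*hrTT0
  have hψ0 : rT*T0^2 = Tmax*((rT-dT)*T0 + s) :=
    mul_left_cancel₀ (by positivity : (4*rT) ≠ 0) hψ0'
  have hslopem : Tmax*(rT-dT) < rT*T0 := by
    have h := mul_pos hTmax (sub_pos.2 hDgt1)
    nlinarith [hrTT0, h]
  have hψfacT : ∀ x : ℝ, s*Tmax + (rT-dT)*x*Tmax - rT*x^2
      = (T0-x)*(rT*(T0+x) - Tmax*(rT-dT)) := fun x => by linear_combination -hψ0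
  have hR0E : hcvR0 s rT rI dT dI Tmax β p q c η ε
      = (rI*(Tmax-T0) + B*Tmax*T0)/((dI+q)*Tmax) := by
    unfold hcvR0
    rw [← hT0def, hBdef]
    field_simp
  have hbridge : (1 < hcvR0 s rT rI dT dI Tmax β p q c η ε)
      ↔ 0 < rI*(Tmax-T0) + B*Tmax*T0 - (dI+q)*Tmax := by
    rw [hR0E, lt_div_iff₀ (by positivity)]
    constructor <;> intro h <;> nlinarith [h]
  obtain ⟨K2, hK2⟩ : ∃ x : ℝ, x = B*(rT - rI + B*Tmax) := ⟨_, rfl⟩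
  obtain ⟨K1, hK1⟩ : ∃ x : ℝ, x = rT*(dI+q) - rI*dT + q*(B*Tmax - rI) - B*Tmax*(rI - (dI+q)) :=
    ⟨_, rfl⟩
  obtain ⟨K0, hK0⟩ : ∃ x : ℝ, x = rI*s + q*Tmax*(rI - (dI+q)) := ⟨_, rfl⟩
  have hK2pos : 0 < K2 := by
    rw [hK2]; exact mul_pos hB (by nlinarith [mul_pos hB hTmax])
  -- extraction of polynomial equations from an equilibrium with I > 0
  have extract : ∀ T I V : ℝ, 0 < I → hcvEquil s rT rI dT dI Tmax β p q c η ε T I V →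
      (s*Tmax + rT*T*(Tmax-T-I) - dT*T*Tmax - B*I*T*Tmax + q*I*Tmax = 0) ∧
      (rI*(Tmax-T-I) + B*T*Tmax - (dI+q)*Tmax = 0) ∧ (c*V = (1-ε)*p*I) := by
    intro T I V hI h
    obtain ⟨e1, e2, e3⟩ := h
    have hV : c*V = (1-ε)*p*I := by linarith
    have hW : (1-η)*β*V*T = B*I*T := by
      rw [hBdef]
      field_simp
      linear_combination T*hV
    have h2 : I*(rI*(1-(T+I)/Tmax) + B*T - (dI+q)) = 0 := by linear_combination e2 - hW
    have hexpr : rI*(1-(T+I)/Tmax) + B*T - (dI+q) = 0 :=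
      (mul_eq_zero.mp h2).resolve_left (ne_of_gt hI)
    have E2 : rI*(Tmax-T-I) + B*T*Tmax - (dI+q)*Tmax = 0 := by
      field_simp at hexpr
      linear_combination hexpr
    have h1 : s + rT*T*(1-(T+I)/Tmax) - dT*T - B*I*T + q*I = 0 := by
      linear_combination e1 + hW
    have E1 : s*Tmax + rT*T*(Tmax-T-I) - dT*T*Tmax - B*I*T*Tmax + q*I*Tmax = 0 := by
      field_simp at h1
      linear_combination h1
    exact ⟨E1, E2, hV⟩
  -- any positive equilibrium satisfies the quadratic
  have quadOf : ∀ T I : ℝ,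
      (s*Tmax + rT*T*(Tmax-T-I) - dT*T*Tmax - B*I*T*Tmax + q*I*Tmax = 0) →
      (rI*(Tmax-T-I) + B*T*Tmax - (dI+q)*Tmax = 0) →
      -K2*T^2 + K1*T + K0 = 0 := by
    intro T I E1 E2
    have hmain : Tmax*(-K2*T^2 + K1*T + K0) = 0 := by
      linear_combination rI*E1 + (Tmax*q - (B*Tmax+rT)*T)*E2
        - (Tmax*T^2)*hK2 + (Tmax*T)*hK1 + Tmax*hK0
    exact (mul_eq_zero.mp hmain).resolve_left hTm'
  -- forward direction
  have FWD : ∀ Ts Is Vs : ℝ, 0 < Ts → 0 < Is →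
      hcvEquil s rT rI dT dI Tmax β p q c η ε Ts Is Vs →
      0 < rI*(Tmax-T0) + B*Tmax*T0 - (dI+q)*Tmax := by
    intro Ts Is Vs hTs hIs heq
    obtain ⟨E1, E2, hVc⟩ := extract Ts Is Vs hIs heq
    by_contra hcon
    push_neg at hcon
    have hfTs : -K2*Ts^2 + K1*Ts + K0 = 0 := quadOf Ts Is E1 E2
    have hgTs : rI*(Tmax-Ts) + B*Tmax*Ts - (dI+q)*Tmax = rI*Is := by linear_combination E2
    have E2I : rI*(Tmax-Ts-Is)*Is + B*Ts*Tmax*Is - (dI+q)*Tmax*Is = 0 := by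
      linear_combination Is*E2
    have hNTm : Ts + Is ≤ Tmax := by
      by_contra hN
      push_neg at hN
      linarith only [E1, E2I,
        mul_pos (mul_pos hrT hTs) (by linarith : (0:ℝ) < Ts+Is-Tmax),
        mul_pos (mul_pos hrI hIs) (by linarith : (0:ℝ) < Ts+Is-Tmax),
        mul_nonneg (mul_nonneg (by linarith : (0:ℝ) ≤ dI-dT) hIs.le) hTmax.le,
        mul_pos (mul_pos hdT hTmax) (by linarith : (0:ℝ) < Ts+Is-Tmax),
        mul_le_mul_of_nonneg_right hsT hTmax.le]
    have hψN : 0 ≤ s*Tmax + (rT-dT)*(Ts+Is)*Tmax - rT*(Ts+Is)^2 := by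
      linarith only [E1, E2I,
        mul_nonneg (mul_nonneg (by linarith : (0:ℝ) ≤ rT-rI) hIs.le)
          (by linarith : (0:ℝ) ≤ Tmax-Ts-Is),
        mul_nonneg (mul_nonneg (by linarith : (0:ℝ) ≤ dI-dT) hIs.le) hTmax.le]
    have hf2N : 0 < rT*(T0+(Ts+Is)) - Tmax*(rT-dT) := by
      nlinarith only [hslopem, mul_pos hrT (by linarith : (0:ℝ) < Ts+Is)]
    have hNT0 : Ts + Is ≤ T0 := by
      nlinarith only [hψN, hψfacT (Ts+Is), hf2N]
    have hT0Ts : Ts < T0 := by linarith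
    have hBrI : B*Tmax < rI := by
      nlinarith only [hcon, hgTs, mul_pos hrI hIs, sub_pos.2 hT0Ts]
    have hrIδ : dI+q < rI := by
      nlinarith only [hgTs, mul_pos hrI hIs, mul_pos (sub_pos.2 hBrI) hTs, hTmax]
    have hne : rI - B*Tmax ≠ 0 := ne_of_gt (sub_pos.2 hBrI)
    have hT1 : (rI-B*Tmax)*((rI-(dI+q))*Tmax/(rI-B*Tmax)) = (rI-(dI+q))*Tmax := by
      field_simp
    set T1 := (rI-(dI+q))*Tmax/(rI-B*Tmax) with hT1def
    have hT1pos : 0 < T1 := by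
      nlinarith only [hT1, mul_pos (sub_pos.2 hrIδ) hTmax, sub_pos.2 hBrI]
    have hTsT1 : Ts < T1 := by
      nlinarith only [hgTs, hT1, mul_pos hrI hIs, sub_pos.2 hBrI]
    have hT1T0 : T1 ≤ T0 := by
      nlinarith only [hcon, hT1, sub_pos.2 hBrI]
    have hgT1 : rI*(Tmax-T1) + B*Tmax*T1 - (dI+q)*Tmax = 0 := by linear_combination -hT1
    have hf2T1 : 0 < rT*(T0+T1) - Tmax*(rT-dT) := by
      nlinarith only [hslopem, mul_pos hrT hT1pos]
    have hTf : Tmax*(-K2*T1^2 + K1*T1 + K0)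
        = rI*((T0-T1)*(rT*(T0+T1) - Tmax*(rT-dT))) := by
      linear_combination rI*(hψfacT T1) + (Tmax*q - (B*Tmax+rT)*T1)*hgT1
        - (Tmax*T1^2)*hK2 + (Tmax*T1)*hK1 + Tmax*hK0
    have hfT1 : 0 ≤ -K2*T1^2 + K1*T1 + K0 := by
      nlinarith only [hTf, mul_nonneg (mul_nonneg hrI.le (sub_nonneg.2 hT1T0)) hf2T1.le, hTmax]
    have hK0pos : 0 < K0 := by
      rw [hK0]
      nlinarith only [mul_pos (mul_pos hq hTmax) (sub_pos.2 hrIδ), mul_pos hrI hs]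
    have hfTsT1 : T1*(-K2*Ts^2 + K1*Ts + K0) = 0 := by linear_combination T1*hfTs
    linarith only [hfTsT1,
      mul_pos (mul_pos hK2pos hTs) (mul_pos hT1pos (sub_pos.2 hTsT1)),
      mul_nonneg hfT1 hTs.le, mul_pos hK0pos (sub_pos.2 hTsT1)]
  -- main existence and uniqueness
  have MAIN : 0 < rI*(Tmax-T0) + B*Tmax*T0 - (dI+q)*Tmax →
      ∃ Ts Is Vs : ℝ,
        (0 < Ts ∧ 0 < Is ∧ 0 < Vs ∧
          hcvEquil s rT rI dT dI Tmax β p q c η ε Ts Is Vs) ∧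
        Is = ((1 - ε) * (1 - η) * β * p * Tmax / c / rI - 1) * Ts
              + Tmax * (1 - (dI + q) / rI) ∧
        Vs = (1 - ε) * p * Is / c ∧
        (∀ Ts' Is' Vs' : ℝ, 0 < Ts' → 0 < Is' → 0 < Vs' →
          hcvEquil s rT rI dT dI Tmax β p q c η ε Ts' Is' Vs' →
          Ts' = Ts ∧ Is' = Is ∧ Vs' = Vs) := by
    intro hγ
    have KEY : ∃ R : ℝ, 0 < R ∧ (-K2*R^2 + K1*R + K0 = 0) ∧
        (0 < rI*(Tmax-R) + B*Tmax*R - (dI+q)*Tmax) ∧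
        (∀ x, 0 < x → 0 < rI*(Tmax-x) + B*Tmax*x - (dI+q)*Tmax →
          -K2*x^2 + K1*x + K0 = 0 → x = R) := by
      rcases le_or_gt (dI+q) rI with hδrI | hδrI
      · have hK0pos : 0 < K0 := by
          rw [hK0]
          nlinarith only [mul_pos hrI hs,
            mul_nonneg (mul_nonneg hq.le hTmax.le) (by linarith : (0:ℝ) ≤ rI - (dI+q))]
        obtain ⟨R, hR, hfR, huq, hmono⟩ :=
          quad_root K2 K1 K0 0 hK2pos (by nlinarith only [hK0pos])
        refine ⟨R, hR, hfR, ?_, fun x hx hgx hfx => huq x hx hfx⟩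
        rcases eq_or_lt_of_le hδrI with heq | hlt
        · have hx : 0 < B*Tmax - rI := by
            nlinarith only [hγ, hT0pos, heq, hTmax]
          nlinarith only [mul_pos hx hR, heq, hTmax]
        rcases le_or_gt rI (B*Tmax) with hσ | hσ
        · nlinarith only [mul_nonneg (by linarith : (0:ℝ) ≤ B*Tmax - rI) hR.le,
            mul_pos (by linarith : (0:ℝ) < rI - (dI+q)) hTmax]
        · have hne : rI - B*Tmax ≠ 0 := ne_of_gt (sub_pos.2 hσ)
          have hT1 : (rI-B*Tmax)*((rI-(dI+q))*Tmax/(rI-B*Tmax)) = (rI-(dI+q))*Tmax := by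
            field_simp
          set T1 := (rI-(dI+q))*Tmax/(rI-B*Tmax) with hT1def
          have hT1pos : 0 < T1 := by
            nlinarith only [hT1, mul_pos (by linarith : (0:ℝ) < rI-(dI+q)) hTmax, sub_pos.2 hσ]
          have hT0T1 : T0 < T1 := by
            nlinarith only [hγ, hT1, sub_pos.2 hσ]
          have hgT1 : rI*(Tmax-T1) + B*Tmax*T1 - (dI+q)*Tmax = 0 := by linear_combination -hT1
          have hf2T1 : 0 < rT*(T0+T1) - Tmax*(rT-dT) := by
            nlinarith only [hslopem, mul_pos hrT hT1pos]
          have hTf : Tmax*(-K2*T1^2 + K1*T1 + K0)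
              = rI*((T0-T1)*(rT*(T0+T1) - Tmax*(rT-dT))) := by
            linear_combination rI*(hψfacT T1) + (Tmax*q - (B*Tmax+rT)*T1)*hgT1
              - (Tmax*T1^2)*hK2 + (Tmax*T1)*hK1 + Tmax*hK0
          have hfT1 : -K2*T1^2 + K1*T1 + K0 < 0 := by
            nlinarith only [hTf, mul_pos (mul_pos hrI (sub_pos.2 hT0T1)) hf2T1, hTmax]
          have hRT1 : R < T1 := hmono T1 hT1pos hfT1
          nlinarith only [hT1, mul_pos (sub_pos.2 hσ) (sub_pos.2 hRT1)]
      · have hσ : rI < B*Tmax := by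
          nlinarith only [hγ, hT0pos, mul_pos (sub_pos.2 hδrI) hTmax]
        have hne : B*Tmax - rI ≠ 0 := ne_of_gt (sub_pos.2 hσ)
        have hT1 : (B*Tmax-rI)*(((dI+q)-rI)*Tmax/(B*Tmax-rI)) = ((dI+q)-rI)*Tmax := by
          field_simp
        set T1 := ((dI+q)-rI)*Tmax/(B*Tmax-rI) with hT1def
        have hT1pos : 0 < T1 := by
          nlinarith only [hT1, mul_pos (sub_pos.2 hδrI) hTmax, sub_pos.2 hσ]
        have hT1T0 : T1 < T0 := by
          nlinarith only [hγ, hT1, sub_pos.2 hσ]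
        have hgT1 : rI*(Tmax-T1) + B*Tmax*T1 - (dI+q)*Tmax = 0 := by linear_combination hT1
        have hf2T1 : 0 < rT*(T0+T1) - Tmax*(rT-dT) := by
          nlinarith only [hslopem, mul_pos hrT hT1pos]
        have hTf : Tmax*(-K2*T1^2 + K1*T1 + K0)
            = rI*((T0-T1)*(rT*(T0+T1) - Tmax*(rT-dT))) := by
          linear_combination rI*(hψfacT T1) + (Tmax*q - (B*Tmax+rT)*T1)*hgT1
            - (Tmax*T1^2)*hK2 + (Tmax*T1)*hK1 + Tmax*hK0
        have hfT1 : 0 < -K2*T1^2 + K1*T1 + K0 := by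
          nlinarith only [hTf, mul_pos (mul_pos hrI (sub_pos.2 hT1T0)) hf2T1, hTmax]
        obtain ⟨R, hR, hfR, huq, hmono⟩ := quad_root K2 K1 K0 T1 hK2pos hfT1
        refine ⟨R, hT1pos.trans hR, hfR, ?_, fun x hx hgx hfx => huq x ?_ hfx⟩
        · nlinarith only [hT1, mul_pos (sub_pos.2 hσ) (sub_pos.2 hR)]
        · nlinarith only [hT1, hgx, sub_pos.2 hσ]
    obtain ⟨R, hRpos, hfR, hgR, hRuniq⟩ := KEY
    obtain ⟨IS, hISdef⟩ : ∃ x : ℝ,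
        x = ((1 - ε) * (1 - η) * β * p * Tmax / c / rI - 1) * R
              + Tmax * (1 - (dI + q) / rI) := ⟨_, rfl⟩
    have hIS : rI*IS = rI*(Tmax-R) + B*Tmax*R - (dI+q)*Tmax := by
      rw [hISdef, hBdef]
      field_simp
      ring
    have hISpos : 0 < IS := by nlinarith only [hIS, hgR, hrI]
    obtain ⟨VS, hVSdef⟩ : ∃ x : ℝ, x = (1 - ε) * p * IS / c := ⟨_, rfl⟩
    have hVSpos : 0 < VS := by
      rw [hVSdef]; exact div_pos (mul_pos (mul_pos h1e hp) hISpos) hc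
    have hVc : c*VS = (1-ε)*p*IS := by rw [hVSdef]; field_simp
    have hW : (1-η)*β*VS*R = B*IS*R := by
      rw [hVSdef, hBdef]; field_simp
    have E2R : rI*(Tmax-R-IS) + B*R*Tmax - (dI+q)*Tmax = 0 := by linear_combination -hIS
    have hmainE1 : rI*(s*Tmax + rT*R*(Tmax-R-IS) - dT*R*Tmax - B*IS*R*Tmax + q*IS*Tmax) = 0 := by
      linear_combination Tmax*hfR + (Tmax*R^2)*hK2 - (Tmax*R)*hK1 - Tmax*hK0
        - (Tmax*q - (B*Tmax+rT)*R)*E2R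
    have hE1t : s*Tmax + rT*R*(Tmax-R-IS) - dT*R*Tmax - B*IS*R*Tmax + q*IS*Tmax = 0 :=
      (mul_eq_zero.mp hmainE1).resolve_left hrI'
    have g1 : s + rT*R*(1-(R+IS)/Tmax) - dT*R - (1-η)*β*VS*R + q*IS = 0 := by
      have h1 : s + rT*R*(1-(R+IS)/Tmax) - dT*R - B*IS*R + q*IS = 0 := by
        field_simp
        linear_combination hE1t
      linear_combination h1 - hW
    have g2 : rI*IS*(1-(R+IS)/Tmax) + (1-η)*β*VS*R - dI*IS - q*IS = 0 := by
      have h2 : rI*IS*(1-(R+IS)/Tmax) + B*IS*R - dI*IS - q*IS = 0 := by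
        field_simp
        linear_combination IS*E2R
      linear_combination h2 + hW
    have g3 : (1-ε)*p*IS - c*VS = 0 := by linear_combination -hVc
    refine ⟨R, IS, VS, ⟨hRpos, hISpos, hVSpos, g1, g2, g3⟩, hISdef, hVSdef, ?_⟩
    intro Ts' Is' Vs' hT' hI' hV' heq'
    obtain ⟨E1', E2', hVc'⟩ := extract Ts' Is' Vs' hI' heq'
    have hfT' : -K2*Ts'^2 + K1*Ts' + K0 = 0 := quadOf Ts' Is' E1' E2'
    have hgT' : 0 < rI*(Tmax-Ts') + B*Tmax*Ts' - (dI+q)*Tmax := by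
      nlinarith only [E2', mul_pos hrI hI']
    have hTR : Ts' = R := hRuniq Ts' hT' hgT' hfT'
    subst hTR
    have hIe : rI*Is' = rI*IS := by linear_combination -E2' - hIS
    have hI2 : Is' = IS := mul_left_cancel₀ hrI' hIe
    subst hI2
    have hVe : c*Vs' = c*VS := by linear_combination hVc' - hVc
    exact ⟨rfl, rfl, mul_left_cancel₀ hc' hVe⟩
  refine ⟨⟨?_, ?_⟩, ?_, ?_⟩
  · rintro ⟨Ts, Is, Vs, hTs, hIs, hVs, heq⟩
    exact hbridge.mpr (FWD Ts Is Vs hTs hIs heq)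
  · intro h
    obtain ⟨Ts, Is, Vs, h1, _⟩ := MAIN (hbridge.mp h)
    exact ⟨Ts, Is, Vs, h1⟩
  · exact fun h => MAIN (hbridge.mp h)
  · intro hle Ts Is Vs hTs hIs0 hVs0 heq
    have hγle : ¬ (0 < rI*(Tmax-T0) + B*Tmax*T0 - (dI+q)*Tmax) := fun hp =>
      absurd (hbridge.mpr hp) (not_lt.mpr hle)
    obtain ⟨e1, e2, e3⟩ := heq
    rcases eq_or_lt_of_le hIs0 with h0 | hIpos
    · have h0' : Is = 0 := h0.symm
      subst h0'
      have hcV : c*Vs = 0 := by linear_combination -e3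
      have hV0 : Vs = 0 := (mul_eq_zero.mp hcV).resolve_left hc'
      subst hV0
      have hE1ψ : s*Tmax + (rT-dT)*Ts*Tmax - rT*Ts^2 = 0 := by
        field_simp at e1
        linear_combination e1
      have hfac : 0 < rT*(T0+Ts) - Tmax*(rT-dT) := by
        nlinarith only [hslopem, mul_pos hrT hTs]
      have h00 : (T0-Ts)*(rT*(T0+Ts) - Tmax*(rT-dT)) = 0 := by
        linear_combination hE1ψ - hψfacT Ts
      have hz : T0 - Ts = 0 := by
        rcases mul_eq_zero.mp h00 with h | h
        · exact h
        · exact absurd h (ne_of_gt hfac)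
      exact ⟨by linarith, rfl, rfl⟩
    · have hVsp : 0 < Vs := by
        have h3 : c*Vs = (1-ε)*p*Is := by linarith
        nlinarith only [h3, mul_pos (mul_pos h1e hp) hIpos, hc]
      exact absurd (FWD Ts Is Vs hTs hIpos ⟨e1, e2, e3⟩) hγle
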